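/- Let G be a finite simple graph and let g, f : V(G) → ℕ be functions with g(x) ≤ f(x) for all x ∈ V(G). Suppose that for every subset S ⊆ V(G), one has g(S) − f(T) + Σ_{x∈T} d_{G−S}(x) ≥ 0, where T = {v ∈ V(G) − S : d_{G−S}(v) < f(v)}. Then for every function q : V(G) → ℕ with g(v) ≤ q(v) ≤ f(v) for all v, the graph G has a fractional q-factor. -/

import Mathlib

open Finset

/-- The degree of `v` in the induced subgraph `G − S` (on `V(G) \ S`), i.e. the number of
neighbors of `v` in `G` that lie outside `S`. -/
def dOut {V : Type*} [Fintype V] [DecidableEq V] (G : SimpleGraph V) [DecidableRel G.Adj]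
    (S : Finset V) (v : V) : ℕ :=
  (G.neighborFinset v \ S).card

/-- `Tset G f S = {v ∈ V(G) − S : d_{G−S}(v) < f v}`. -/
def Tset {V : Type*} [Fintype V] [DecidableEq V] (G : SimpleGraph V) [DecidableRel G.Adj]
    (f : V → ℕ) (S : Finset V) : Finset V :=
  Sᶜ.filter fun v => dOut G S v < f v

section Aux

variable {V : Type*} [Fintype V] [DecidableEq V] (G : SimpleGraph V) [DecidableRel G.Adj]

lemma sum_dOut_eq_card (C S : Finset V) :
    ∑ v ∈ C, dOut G S v =
      (univ.filter fun d : G.Dart => d.fst ∈ C ∧ d.snd ∉ S).card := by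
  have H : ∀ d ∈ (univ.filter fun d : G.Dart => d.fst ∈ C ∧ d.snd ∉ S),
      d.fst ∈ C := fun d hd => (mem_filter.mp hd).2.1
  rw [Finset.card_eq_sum_card_fiberwise H]
  refine Finset.sum_congr rfl fun v hv => ?_
  rw [filter_filter]
  refine Finset.card_bij' (fun w hw => ?_) (fun d hd => d.snd) ?_ ?_ ?_ ?_
  · exact ⟨(v, w), by
      have := (Finset.mem_sdiff.mp hw).1
      exact (SimpleGraph.mem_neighborFinset G v w).mp this⟩
  · intro w hw
    simp only [mem_filter, mem_univ, true_and]
    exact ⟨⟨hv, (Finset.mem_sdiff.mp hw).2⟩, trivial⟩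
  · intro d hd
    simp only [mem_filter, mem_univ, true_and] at hd
    obtain ⟨⟨_, hdS⟩, hdv⟩ := hd
    rw [Finset.mem_sdiff]
    refine ⟨?_, hdS⟩
    rw [SimpleGraph.mem_neighborFinset]
    exact hdv ▸ d.adj
  · intro w hw
    rfl
  · intro d hd
    simp only [mem_filter, mem_univ, true_and] at hd
    exact SimpleGraph.Dart.ext _ _ (Prod.ext hd.2.symm rfl)

lemma card_dart_symm (P : G.Dart → Prop) [DecidablePred P] :
    (univ.filter P).card = (univ.filter fun d : G.Dart => P d.symm).card := by
  have h : (univ.filter fun d : G.Dart => P d.symm) = (univ.filter P).image SimpleGraph.Dart.symm := by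
    ext d
    simp only [mem_filter, mem_univ, true_and, mem_image]
    constructor
    · intro h; exact ⟨d.symm, h, SimpleGraph.Dart.symm_symm d⟩
    · rintro ⟨d', h, rfl⟩; simpa using h
  rw [h, Finset.card_image_of_injective _ SimpleGraph.Dart.symm_involutive.injective]

lemma star_ineq (g f q : V → ℕ) (hgq : ∀ v, g v ≤ q v) (hqf : ∀ v, q v ≤ f v)
    (hcond : ∀ S : Finset V,
      0 ≤ (∑ v ∈ S, (g v : ℤ)) - (∑ v ∈ Tset G f S, (f v : ℤ)) +
          ∑ v ∈ Tset G f S, (dOut G S v : ℤ))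
    (S U : Finset V) (hUS : ∀ v ∈ U, v ∉ S) :
    ∑ v ∈ U, q v ≤ ∑ v ∈ S, q v + ∑ v ∈ U, dOut G S v := by
  have key : ∑ v ∈ U, ((q v : ℤ) - (dOut G S v : ℤ)) ≤ ∑ v ∈ S, (q v : ℤ) := by
    have h0 := hcond S
    have h1 : ∑ v ∈ Tset G f S, ((f v : ℤ) - (dOut G S v : ℤ)) ≤ ∑ v ∈ S, (g v : ℤ) := by
      rw [Finset.sum_sub_distrib]; linarith
    have h2 : ∑ v ∈ S, (g v : ℤ) ≤ ∑ v ∈ S, (q v : ℤ) :=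
      Finset.sum_le_sum fun v _ => by exact_mod_cast hgq v
    set U' := U.filter (fun v => dOut G S v < q v) with hU'
    have h3 : U' ⊆ Tset G f S := by
      intro v hv
      rw [hU', mem_filter] at hv
      rw [Tset, mem_filter, Finset.mem_compl]
      exact ⟨hUS v hv.1, lt_of_lt_of_le hv.2 (hqf v)⟩
    have h4 : ∑ v ∈ U', ((q v : ℤ) - (dOut G S v : ℤ)) ≤
        ∑ v ∈ U', ((f v : ℤ) - (dOut G S v : ℤ)) :=
      Finset.sum_le_sum fun v _ => by
        have := hqf v; omega
    have h5 : ∑ v ∈ U', ((f v : ℤ) - (dOut G S v : ℤ)) ≤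
        ∑ v ∈ Tset G f S, ((f v : ℤ) - (dOut G S v : ℤ)) := by
      refine Finset.sum_le_sum_of_subset_of_nonneg h3 fun v hv _ => ?_
      rw [Tset, mem_filter] at hv
      omega
    have h6 : ∑ v ∈ U, ((q v : ℤ) - (dOut G S v : ℤ)) ≤
        ∑ v ∈ U', ((q v : ℤ) - (dOut G S v : ℤ)) := by
      rw [← Finset.sum_filter_add_sum_filter_not U (fun v => dOut G S v < q v), ← hU']
      have : ∑ v ∈ U.filter (fun v => ¬ dOut G S v < q v),
          ((q v : ℤ) - (dOut G S v : ℤ)) ≤ 0 := by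
        refine Finset.sum_nonpos fun v hv => ?_
        rw [mem_filter] at hv
        omega
      linarith
    linarith
  have := key
  rw [Finset.sum_sub_distrib] at this
  have hcast : ((∑ v ∈ U, q v : ℕ) : ℤ) ≤ ((∑ v ∈ S, q v + ∑ v ∈ U, dOut G S v : ℕ) : ℤ) := by
    push_cast
    linarith
  exact_mod_cast hcast

lemma diamond2 (g f q : V → ℕ) (hgq : ∀ v, g v ≤ q v) (hqf : ∀ v, q v ≤ f v)
    (hcond : ∀ S : Finset V,
      0 ≤ (∑ v ∈ S, (g v : ℤ)) - (∑ v ∈ Tset G f S, (f v : ℤ)) +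
          ∑ v ∈ Tset G f S, (dOut G S v : ℤ))
    (A B : Finset V) :
    ∑ v ∈ A, q v ≤ ∑ v ∈ B, q v +
      (univ.filter fun d : G.Dart => d.fst ∈ A ∧ d.snd ∉ B).card := by
  have hstar := star_ineq G g f q hgq hqf hcond (B \ A) (A \ B)
    (fun v hv hv' => (Finset.mem_sdiff.mp hv').2 (Finset.mem_sdiff.mp hv).1)
  rw [sum_dOut_eq_card] at hstar
  have e1 : ((univ.filter fun d : G.Dart => d.fst ∈ A \ B ∧ d.snd ∉ B \ A).filter
      (fun d : G.Dart => d.snd ∉ B)) =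
      univ.filter (fun d : G.Dart => d.fst ∈ A \ B ∧ d.snd ∉ B) := by
    ext d
    simp only [mem_filter, mem_univ, true_and, Finset.mem_sdiff]
    tauto
  have e2 : ((univ.filter fun d : G.Dart => d.fst ∈ A \ B ∧ d.snd ∉ B \ A).filter
      (fun d : G.Dart => ¬ d.snd ∉ B)) =
      univ.filter (fun d : G.Dart => d.fst ∈ A \ B ∧ d.snd ∈ A ∩ B) := by
    ext d
    simp only [mem_filter, mem_univ, true_and, Finset.mem_sdiff, Finset.mem_inter, not_not]
    tauto
  have hsplit : (univ.filter fun d : G.Dart => d.fst ∈ A \ B ∧ d.snd ∉ B \ A).card =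
      (univ.filter fun d : G.Dart => d.fst ∈ A \ B ∧ d.snd ∉ B).card +
      (univ.filter fun d : G.Dart => d.fst ∈ A \ B ∧ d.snd ∈ A ∩ B).card := by
    rw [← Finset.card_filter_add_card_filter_not
      (s := univ.filter fun d : G.Dart => d.fst ∈ A \ B ∧ d.snd ∉ B \ A)
      (p := fun d : G.Dart => d.snd ∉ B), e1, e2]
  have hsymm : (univ.filter fun d : G.Dart => d.fst ∈ A \ B ∧ d.snd ∈ A ∩ B).card =
      (univ.filter fun d : G.Dart => d.snd ∈ A \ B ∧ d.fst ∈ A ∩ B).card := by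
    rw [card_dart_symm G (fun d : G.Dart => d.fst ∈ A \ B ∧ d.snd ∈ A ∩ B)]
    simp [SimpleGraph.Dart.symm]
  have hunion : (univ.filter fun d : G.Dart => d.fst ∈ A \ B ∧ d.snd ∉ B).card +
      (univ.filter fun d : G.Dart => d.snd ∈ A \ B ∧ d.fst ∈ A ∩ B).card ≤
      (univ.filter fun d : G.Dart => d.fst ∈ A ∧ d.snd ∉ B).card := by
    rw [← Finset.card_union_of_disjoint]
    · refine Finset.card_le_card fun d hd => ?_
      rw [Finset.mem_union, mem_filter, mem_filter] at hd
      rw [mem_filter]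
      rcases hd with ⟨h1, h2, h3⟩ | ⟨h1, h2, h3⟩
      · exact ⟨h1, (Finset.mem_sdiff.mp h2).1, h3⟩
      · exact ⟨h1, (Finset.mem_inter.mp h3).1, (Finset.mem_sdiff.mp h2).2⟩
    · rw [Finset.disjoint_left]
      intro d hd hd'
      rw [mem_filter] at hd hd'
      exact (Finset.mem_sdiff.mp hd.2.1).2 (Finset.mem_inter.mp hd'.2.2).2
  have hA : ∑ v ∈ A \ B, q v + ∑ v ∈ A ∩ B, q v = ∑ v ∈ A, q v := by
    rw [← Finset.sdiff_inter_self_left A B]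
    exact Finset.sum_sdiff Finset.inter_subset_left
  have hB : ∑ v ∈ B \ A, q v + ∑ v ∈ A ∩ B, q v = ∑ v ∈ B, q v := by
    rw [Finset.inter_comm, ← Finset.sdiff_inter_self_left B A]
    exact Finset.sum_sdiff Finset.inter_subset_left
  omega

variable (q : V → ℕ)

/-- The Hall-type neighborhood function for the vertex-split double cover gadget. -/
def hallNbhd : ((Σ v : V, Fin (q v)) ⊕ G.Dart) → Finset ((Σ v : V, Fin (q v)) ⊕ G.Dart)
  | Sum.inl σ => (univ.filter fun d : G.Dart => d.fst = σ.1).image Sum.inr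
  | Sum.inr d => insert (Sum.inr d)
      ((univ : Finset (Fin (q d.snd))).image fun i =>
        (Sum.inl ⟨d.snd, i⟩ : (Σ v : V, Fin (q v)) ⊕ G.Dart))

lemma mem_hallNbhd_inl (σ : Σ v : V, Fin (q v)) (y : (Σ v : V, Fin (q v)) ⊕ G.Dart) :
    y ∈ hallNbhd G q (Sum.inl σ) ↔ ∃ d : G.Dart, d.fst = σ.1 ∧ Sum.inr d = y := by
  simp [hallNbhd]

lemma mem_hallNbhd_inr (d : G.Dart) (y : (Σ v : V, Fin (q v)) ⊕ G.Dart) :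
    y ∈ hallNbhd G q (Sum.inr d) ↔
      y = Sum.inr d ∨ ∃ i : Fin (q d.snd), (Sum.inl ⟨d.snd, i⟩ : (Σ v : V, Fin (q v)) ⊕ G.Dart) = y := by
  simp [hallNbhd]

lemma hall_condition (g f : V → ℕ) (hgq : ∀ v, g v ≤ q v) (hqf : ∀ v, q v ≤ f v)
    (hcond : ∀ S : Finset V,
      0 ≤ (∑ v ∈ S, (g v : ℤ)) - (∑ v ∈ Tset G f S, (f v : ℤ)) +
          ∑ v ∈ Tset G f S, (dOut G S v : ℤ))
    (s : Finset ((Σ v : V, Fin (q v)) ⊕ G.Dart)) :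
    s.card ≤ (s.biUnion (hallNbhd G q)).card := by
  classical
  set sC : Finset (Σ v : V, Fin (q v)) := univ.filter (fun σ => Sum.inl σ ∈ s) with hsC
  set sD : Finset G.Dart := univ.filter (fun d => Sum.inr d ∈ s) with hsD
  set A : Finset V := sC.image Sigma.fst with hA
  set B : Finset V := sD.image (fun d => d.snd) with hB
  set F : Finset G.Dart := univ.filter (fun d : G.Dart => d.fst ∈ A) with hF
  set C₂ : Finset (Σ v : V, Fin (q v)) := B.sigma (fun v => (univ : Finset (Fin (q v)))) with hC₂
  -- s decomposes
  have hs : s = sC.image Sum.inl ∪ sD.image Sum.inr := by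
    ext w
    cases w with
    | inl σ => simp [hsC, hsD]
    | inr d => simp [hsC, hsD]
  have hscard : s.card = sC.card + sD.card := by
    rw [hs, Finset.card_union_of_disjoint, Finset.card_image_of_injective _ Sum.inl_injective,
      Finset.card_image_of_injective _ Sum.inr_injective]
    simp [Finset.disjoint_left]
  -- the subset of the neighborhood
  have hsub : (F ∪ sD).image Sum.inr ∪ C₂.image Sum.inl ⊆ s.biUnion (hallNbhd G q) := by
    intro y hy
    rw [Finset.mem_union] at hy
    rcases hy with hy | hy
    · obtain ⟨d, hd, rfl⟩ := Finset.mem_image.mp hy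
      rw [Finset.mem_union] at hd
      rcases hd with hd | hd
      · rw [hF, mem_filter] at hd
        obtain ⟨σ, hσ, hσ1⟩ := Finset.mem_image.mp hd.2
        rw [hsC, mem_filter] at hσ
        refine Finset.mem_biUnion.mpr ⟨Sum.inl σ, hσ.2, ?_⟩
        rw [mem_hallNbhd_inl]
        exact ⟨d, hσ1.symm, rfl⟩
      · rw [hsD, mem_filter] at hd
        refine Finset.mem_biUnion.mpr ⟨Sum.inr d, hd.2, ?_⟩
        rw [mem_hallNbhd_inr]
        exact Or.inl rfl
    · obtain ⟨σ, hσ, rfl⟩ := Finset.mem_image.mp hy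
      rw [hC₂, Finset.mem_sigma] at hσ
      obtain ⟨v, i⟩ := σ
      obtain ⟨d, hd, hdv⟩ := Finset.mem_image.mp hσ.1
      rw [hsD, mem_filter] at hd
      refine Finset.mem_biUnion.mpr ⟨Sum.inr d, hd.2, ?_⟩
      rw [mem_hallNbhd_inr]
      subst hdv
      exact Or.inr ⟨i, rfl⟩
  have hcard2 : (F ∪ sD).card + C₂.card ≤ (s.biUnion (hallNbhd G q)).card := by
    have hdisj : Disjoint ((F ∪ sD).image (Sum.inr : G.Dart → (Σ v : V, Fin (q v)) ⊕ G.Dart))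
        (C₂.image (Sum.inl : (Σ v : V, Fin (q v)) → (Σ v : V, Fin (q v)) ⊕ G.Dart)) := by
      simp [Finset.disjoint_left]
    have h := Finset.card_le_card hsub
    rw [Finset.card_union_of_disjoint hdisj,
      Finset.card_image_of_injective _ Sum.inr_injective,
      Finset.card_image_of_injective _ Sum.inl_injective] at h
    exact h
  -- counting
  have h1 : sC.card ≤ ∑ v ∈ A, q v := by
    have hsub2 : sC ⊆ A.sigma (fun v => (univ : Finset (Fin (q v)))) := by
      intro σ hσ
      rw [Finset.mem_sigma]
      exact ⟨Finset.mem_image_of_mem _ hσ, Finset.mem_univ _⟩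
    calc sC.card ≤ (A.sigma (fun v => (univ : Finset (Fin (q v))))).card :=
          Finset.card_le_card hsub2
      _ = ∑ v ∈ A, q v := by rw [Finset.card_sigma]; simp
  have hC₂card : C₂.card = ∑ v ∈ B, q v := by
    rw [hC₂, Finset.card_sigma]; simp
  have h2 : (sD ∩ F).card ≤ (univ.filter fun d : G.Dart => d.fst ∈ A ∧ d.snd ∈ B).card := by
    refine Finset.card_le_card fun d hd => ?_
    rw [Finset.mem_inter, hsD, hF, mem_filter, mem_filter] at hd
    rw [mem_filter]
    exact ⟨Finset.mem_univ _, hd.2.2, Finset.mem_image_of_mem _ (by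
      rw [hsD, mem_filter]; exact ⟨Finset.mem_univ _, hd.1.2⟩)⟩
  have hFsplit : F.card = (univ.filter fun d : G.Dart => d.fst ∈ A ∧ d.snd ∈ B).card +
      (univ.filter fun d : G.Dart => d.fst ∈ A ∧ d.snd ∉ B).card := by
    rw [← Finset.card_filter_add_card_filter_not
      (s := F) (p := fun d : G.Dart => d.snd ∈ B)]
    congr 1 <;> · rw [hF, filter_filter]
  have hdia := diamond2 G g f q hgq hqf hcond A B
  have hsDsplit : (sD ∩ F).card + (sD \ F).card = sD.card :=
    Finset.card_inter_add_card_sdiff sD F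
  have hFE : (F ∪ sD).card + (F ∩ sD).card = F.card + sD.card :=
    Finset.card_union_add_card_inter F sD
  have hint : (F ∩ sD).card = (sD ∩ F).card := by rw [Finset.inter_comm]
  omega

lemma dart_edge_mem_incidenceFinset_iff (d : G.Dart) (x : V) :
    d.edge ∈ G.incidenceFinset x ↔ (d.fst = x ∨ d.snd = x) := by
  rw [SimpleGraph.mem_incidenceFinset]
  have : d.edge = s(d.fst, d.snd) := rfl
  rw [this, SimpleGraph.mk'_mem_incidenceSet_iff]
  constructor
  · rintro ⟨_, h | h⟩
    · exact Or.inl h.symm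
    · exact Or.inr h.symm
  · rintro (h | h)
    · exact ⟨d.adj, Or.inl h.symm⟩
    · exact ⟨d.adj, Or.inr h.symm⟩

end Aux

/-- `h` is (the indicator function of) a fractional `(g,f)`-factor of `G`:
`0 ≤ h(e) ≤ 1` on every edge and `g x ≤ Σ_{e ∋ x} h e ≤ f x` for every vertex `x`. -/
def IsFracFactor {V : Type*} [Fintype V] [DecidableEq V] (G : SimpleGraph V)
    [DecidableRel G.Adj] (g f : V → ℕ) (h : Sym2 V → ℝ) : Prop :=
  (∀ e ∈ G.edgeFinset, 0 ≤ h e ∧ h e ≤ 1) ∧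
  ∀ x : V, (g x : ℝ) ≤ ∑ e ∈ G.incidenceFinset x, h e ∧
    ∑ e ∈ G.incidenceFinset x, h e ≤ (f x : ℝ)

/-- `G` has all fractional `(g,f)`-factors: for every `q : V → ℕ` with `g ≤ q ≤ f`
pointwise, `G` has a fractional `q`-factor (a fractional `(q,q)`-factor). -/
def HasAllFracFactors {V : Type*} [Fintype V] [DecidableEq V] (G : SimpleGraph V)
    [DecidableRel G.Adj] (g f : V → ℕ) : Prop :=
  ∀ q : V → ℕ, (∀ v, g v ≤ q v) → (∀ v, q v ≤ f v) → ∃ h, IsFracFactor G q q h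

/-- Sufficiency in Theorem 5: if `g(S) − f(T) + Σ_{x∈T} d_{G−S}(x) ≥ 0` for every
`S ⊆ V(G)` (with `T = {v ∈ V(G)−S : d_{G−S}(v) < f v}`), then for every `q : V → ℕ`
with `g ≤ q ≤ f` pointwise, `G` has a fractional `q`-factor. -/
theorem fractional_q_factor_of_condition {V : Type*} [Fintype V] [DecidableEq V]
    (G : SimpleGraph V) [DecidableRel G.Adj] (g f : V → ℕ) (hgf : ∀ x, g x ≤ f x)
    (hcond : ∀ S : Finset V,
      0 ≤ (∑ v ∈ S, (g v : ℤ)) - (∑ v ∈ Tset G f S, (f v : ℤ)) +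
          ∑ v ∈ Tset G f S, (dOut G S v : ℤ)) :
    ∀ q : V → ℕ, (∀ v, g v ≤ q v) → (∀ v, q v ≤ f v) →
      ∃ h : Sym2 V → ℝ, IsFracFactor G q q h := by
  intro q hgq hqf
  classical
  obtain ⟨bf, hbfinj, hbfmem⟩ :=
    (Finset.all_card_le_biUnion_card_iff_exists_injective (hallNbhd G q)).mp
      (hall_condition G q g f hgq hqf hcond)
  have hbfsurj : Function.Surjective bf := Finite.surjective_of_injective hbfinj
  set M : Finset G.Dart := univ.filter (fun d => bf (Sum.inr d) ≠ Sum.inr d) with hM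
  have hsnd : ∀ v : V, (M.filter fun d => d.snd = v).card = q v := by
    intro v
    have hinj : Function.Injective
        (fun i : Fin (q v) => (Sum.inl ⟨v, i⟩ : (Σ w : V, Fin (q w)) ⊕ G.Dart)) := by
      intro i j hij
      simpa using hij
    have himg : ((M.filter fun d => d.snd = v).image
        (Sum.inr : G.Dart → (Σ w : V, Fin (q w)) ⊕ G.Dart)).image bf =
        (univ : Finset (Fin (q v))).image
          (fun i => (Sum.inl ⟨v, i⟩ : (Σ w : V, Fin (q w)) ⊕ G.Dart)) := by
      ext y
      constructor
      · intro hy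
        obtain ⟨x, hx, rfl⟩ := Finset.mem_image.mp hy
        obtain ⟨d, hd, rfl⟩ := Finset.mem_image.mp hx
        obtain ⟨hdM, hdv⟩ := Finset.mem_filter.mp hd
        rw [hM, Finset.mem_filter] at hdM
        have hmem := hbfmem (Sum.inr d)
        rw [mem_hallNbhd_inr] at hmem
        rcases hmem with h | ⟨i, hi⟩
        · exact absurd h hdM.2
        · subst hdv
          rw [← hi]
          exact Finset.mem_image.mpr ⟨i, Finset.mem_univ _, rfl⟩
      · intro hy
        obtain ⟨i, _, rfl⟩ := Finset.mem_image.mp hy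
        obtain ⟨x, hx⟩ := hbfsurj (Sum.inl ⟨v, i⟩)
        cases x with
        | inl σ =>
          have hmem := hbfmem (Sum.inl σ)
          rw [mem_hallNbhd_inl] at hmem
          obtain ⟨d, _, hd2⟩ := hmem
          rw [hx] at hd2
          exact absurd hd2 (by simp)
        | inr d =>
          have hmem := hbfmem (Sum.inr d)
          rw [mem_hallNbhd_inr] at hmem
          rcases hmem with h | ⟨j, hj⟩
          · rw [hx] at h
            exact absurd h (by simp)
          · have hdv : d.snd = v := by
              rw [hx] at hj
              exact (Sigma.mk.inj_iff.mp (Sum.inl.inj hj)).1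
            have hdM : d ∈ M.filter fun d => d.snd = v := by
              rw [Finset.mem_filter, hM, Finset.mem_filter]
              refine ⟨⟨Finset.mem_univ _, ?_⟩, hdv⟩
              rw [hx]
              simp
            rw [← hx]
            exact Finset.mem_image.mpr ⟨Sum.inr d, Finset.mem_image.mpr ⟨d, hdM, rfl⟩, rfl⟩
    have hcards := congrArg Finset.card himg
    rw [Finset.card_image_of_injective _ hbfinj,
      Finset.card_image_of_injective _ Sum.inr_injective,
      Finset.card_image_of_injective _ hinj] at hcards
    simpa using hcards
  have hfst : ∀ u : V, (M.filter fun d => d.fst = u).card = q u := by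
    intro u
    have hinj : Function.Injective
        (fun i : Fin (q u) => (Sum.inl ⟨u, i⟩ : (Σ w : V, Fin (q w)) ⊕ G.Dart)) := by
      intro i j hij
      simpa using hij
    have himg : (((univ : Finset (Fin (q u))).image
        (fun i => (Sum.inl ⟨u, i⟩ : (Σ w : V, Fin (q w)) ⊕ G.Dart))).image bf) =
        (M.filter fun d => d.fst = u).image
          (Sum.inr : G.Dart → (Σ w : V, Fin (q w)) ⊕ G.Dart) := by
      ext y
      constructor
      · intro hy
        obtain ⟨x, hx, rfl⟩ := Finset.mem_image.mp hy
        obtain ⟨i, _, rfl⟩ := Finset.mem_image.mp hx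
        have hmem := hbfmem (Sum.inl ⟨u, i⟩)
        rw [mem_hallNbhd_inl] at hmem
        obtain ⟨d, hd1, hd2⟩ := hmem
        rw [← hd2]
        refine Finset.mem_image.mpr ⟨d, Finset.mem_filter.mpr ⟨?_, hd1⟩, rfl⟩
        rw [hM, Finset.mem_filter]
        refine ⟨Finset.mem_univ _, fun hcontra => ?_⟩
        have := hbfinj (hcontra.trans hd2)
        simp at this
      · intro hy
        obtain ⟨d, hd, rfl⟩ := Finset.mem_image.mp hy
        obtain ⟨hdM, hdu⟩ := Finset.mem_filter.mp hd
        rw [hM, Finset.mem_filter] at hdM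
        obtain ⟨x, hx⟩ := hbfsurj (Sum.inr d)
        cases x with
        | inr d' =>
          have hmem := hbfmem (Sum.inr d')
          rw [mem_hallNbhd_inr] at hmem
          rcases hmem with h | ⟨j, hj⟩
          · rw [hx] at h
            obtain rfl := Sum.inr.inj h
            exact absurd hx hdM.2
          · rw [hx] at hj
            exact absurd hj (by simp)
        | inl σ =>
          have hmem := hbfmem (Sum.inl σ)
          rw [mem_hallNbhd_inl] at hmem
          obtain ⟨d', hd'1, hd'2⟩ := hmem
          rw [hx] at hd'2
          obtain rfl := Sum.inr.inj hd'2
          obtain ⟨w, j⟩ := σ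
          have hwu : w = u := by
            rw [← hdu]
            exact hd'1.symm
          subst hwu
          rw [← hx]
          exact Finset.mem_image_of_mem bf (Finset.mem_image.mpr ⟨j, Finset.mem_univ _, rfl⟩)
    have hcards := congrArg Finset.card himg
    rw [Finset.card_image_of_injective _ hbfinj,
      Finset.card_image_of_injective _ Sum.inr_injective,
      Finset.card_image_of_injective _ hinj] at hcards
    simpa using hcards.symm
  refine ⟨fun e => ((M.filter fun d => d.edge = e).card : ℝ) / 2, ?_, ?_⟩
  · intro e he
    refine ⟨by positivity, ?_⟩
    rw [div_le_one (by norm_num)]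
    induction e using Sym2.ind with
    | _ u v =>
      rw [SimpleGraph.mem_edgeFinset, SimpleGraph.mem_edgeSet] at he
      have hss : (M.filter fun d => d.edge = s(u, v)) ⊆
          {(⟨(u, v), he⟩ : G.Dart), (⟨(u, v), he⟩ : G.Dart).symm} := by
        intro d hd
        rw [Finset.mem_filter] at hd
        rw [Finset.mem_insert, Finset.mem_singleton]
        rcases SimpleGraph.dart_edge_eq_mk'_iff'.mp hd.2 with ⟨h1, h2⟩ | ⟨h1, h2⟩
        · left
          exact SimpleGraph.Dart.ext _ _ (Prod.ext h1 h2)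
        · right
          exact SimpleGraph.Dart.ext _ _ (Prod.ext h1 h2)
      have h2 : ((M.filter fun d => d.edge = s(u, v)).card : ℝ) ≤
          (({(⟨(u, v), he⟩ : G.Dart), (⟨(u, v), he⟩ : G.Dart).symm} : Finset G.Dart).card : ℝ) := by
        exact_mod_cast Finset.card_le_card hss
      refine le_trans h2 ?_
      have := Finset.card_insert_le (⟨(u, v), he⟩ : G.Dart)
        ({(⟨(u, v), he⟩ : G.Dart).symm} : Finset G.Dart)
      have h3 : (({(⟨(u, v), he⟩ : G.Dart), (⟨(u, v), he⟩ : G.Dart).symm} : Finset G.Dart).card) ≤ 2 := by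
        simpa using this
      exact_mod_cast h3
  · intro x
    have hcount : (M.filter fun d => d.edge ∈ G.incidenceFinset x).card = 2 * q x := by
      have hfe : (M.filter fun d => d.edge ∈ G.incidenceFinset x)
          = M.filter (fun d => d.fst = x ∨ d.snd = x) := by
        apply Finset.filter_congr
        intro d _
        exact dart_edge_mem_incidenceFinset_iff G d x
      rw [hfe, Finset.filter_or, Finset.card_union_of_disjoint, hfst, hsnd]
      · ring
      · rw [Finset.disjoint_left]
        intro d hd hd'
        rw [Finset.mem_filter] at hd hd'
        exact d.fst_ne_snd (hd.2.trans hd'.2.symm)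
    have hfib : (M.filter fun d => d.edge ∈ G.incidenceFinset x).card
        = ∑ e ∈ G.incidenceFinset x, (M.filter fun d => d.edge = e).card := by
      rw [Finset.card_eq_sum_card_fiberwise
        (f := SimpleGraph.Dart.edge) (s := M.filter fun d => d.edge ∈ G.incidenceFinset x)
        (t := G.incidenceFinset x)
        (fun d hd => by simpa using (Finset.mem_filter.mp hd).2)]
      refine Finset.sum_congr rfl fun e he => ?_
      congr 1
      rw [Finset.filter_filter]
      exact Finset.filter_congr fun d _ =>
        ⟨And.right, fun h => ⟨h ▸ he, h⟩⟩
    have hsum : ∑ e ∈ G.incidenceFinset x, ((M.filter fun d => d.edge = e).card : ℝ) / 2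
        = (q x : ℝ) := by
      rw [← Finset.sum_div]
      have : ∑ e ∈ G.incidenceFinset x, ((M.filter fun d => d.edge = e).card : ℝ)
          = ((∑ e ∈ G.incidenceFinset x, (M.filter fun d => d.edge = e).card : ℕ) : ℝ) := by
        push_cast
        rfl
      rw [this, ← hfib, hcount]
      push_cast
      ring
    rw [hsum]
    exact ⟨le_refl _, le_refl _⟩
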